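/- Suppose the sequence (x^k, λ^k) is generated by P-ALM, i.e., x^{k+1} ∈ X minimizes x ↦ θ(x) − ⟨λ^k, Ax − b⟩ + (r/2)‖A(x − x^k)‖² + (1/2)⟨x − x^k, Q(x − x^k)⟩ over X and λ^{k+1} = λ^k − r(A(2x^{k+1} − x^k) − b). Then for any integers T > 0 and κ ≥ 0, the ergodic averages x_T = (1/(T+1)) ∑_{k=κ}^{κ+T} x^{k+1} and w_T = (1/(T+1)) ∑_{k=κ}^{κ+T} w^{k+1} satisfy, for every w = (x, λ) ∈ M: θ(x_T) − θ(x) + ⟨w_T − w, J(w)⟩ ≤ ‖w^κ − w‖²_H / (2(T+1)). -/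

import Mathlib

open Matrix Finset

noncomputable section

/-- The bilinear form `(w₁, w₂) ↦ ⟨w₁, H w₂⟩` of the P-ALM matrix
`H = [[rAᵀA + Q, Aᵀ], [A, (1/r)I]]` on `ℝⁿ × ℝᵐ`. -/
def Hbil {n m : ℕ} (A : Matrix (Fin m) (Fin n) ℝ) (Q : Matrix (Fin n) (Fin n) ℝ) (r : ℝ)
    (w₁ w₂ : (Fin n → ℝ) × (Fin m → ℝ)) : ℝ :=
  w₁.1 ⬝ᵥ ((r • (Aᵀ * A) + Q) *ᵥ w₂.1) + w₁.1 ⬝ᵥ (Aᵀ *ᵥ w₂.2) + w₁.2 ⬝ᵥ (A *ᵥ w₂.1)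
    + 1 / r * (w₁.2 ⬝ᵥ w₂.2)

/-- The squared `H`-weighted norm `‖w‖²_H = ⟨w, Hw⟩`. -/
def HnormSq {n m : ℕ} (A : Matrix (Fin m) (Fin n) ℝ) (Q : Matrix (Fin n) (Fin n) ℝ) (r : ℝ)
    (w : (Fin n → ℝ) × (Fin m → ℝ)) : ℝ := Hbil A Q r w w

/-- The affine map `J(x, λ) = (−Aᵀλ, Ax − b)`. -/
def Jmap {n m : ℕ} (A : Matrix (Fin m) (Fin n) ℝ) (b : Fin m → ℝ)
    (w : (Fin n → ℝ) × (Fin m → ℝ)) : (Fin n → ℝ) × (Fin m → ℝ) :=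
  (-(Aᵀ *ᵥ w.2), A *ᵥ w.1 - b)

/-- The Euclidean inner product on `ℝⁿ × ℝᵐ`. -/
def pdot {n m : ℕ} (w₁ w₂ : (Fin n → ℝ) × (Fin m → ℝ)) : ℝ := w₁.1 ⬝ᵥ w₂.1 + w₁.2 ⬝ᵥ w₂.2

/-- `w* = (x*, λ*)` belongs to the solution set `M*` of `VI(θ, J, M)`, `M = X × ℝᵐ`:
`w*.1 ∈ X` and `θ(x) − θ(x*) + ⟨w − w*, J(w*)⟩ ≥ 0` for all `w ∈ M`. -/
def SolPoint {n m : ℕ} (θ : (Fin n → ℝ) → ℝ) (X : Set (Fin n → ℝ))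
    (A : Matrix (Fin m) (Fin n) ℝ) (b : Fin m → ℝ) (ws : (Fin n → ℝ) × (Fin m → ℝ)) : Prop :=
  ws.1 ∈ X ∧ ∀ w : (Fin n → ℝ) × (Fin m → ℝ), w.1 ∈ X →
    θ w.1 - θ ws.1 + pdot (w - ws) (Jmap A b ws) ≥ 0

/-- The P-ALM iteration: `x^{k+1} ∈ X` minimizes
`x ↦ θ(x) − ⟨λᵏ, Ax − b⟩ + (r/2)‖A(x − xᵏ)‖² + (1/2)⟨x − xᵏ, Q(x − xᵏ)⟩` over `X`, and
`λ^{k+1} = λᵏ − r(A(2x^{k+1} − xᵏ) − b)`. -/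
def PALM {n m : ℕ} (θ : (Fin n → ℝ) → ℝ) (X : Set (Fin n → ℝ))
    (A : Matrix (Fin m) (Fin n) ℝ) (b : Fin m → ℝ) (r : ℝ) (Q : Matrix (Fin n) (Fin n) ℝ)
    (x : ℕ → Fin n → ℝ) (lam : ℕ → Fin m → ℝ) : Prop :=
  (∀ k : ℕ, x (k + 1) ∈ X ∧ ∀ z ∈ X,
      θ (x (k + 1)) - lam k ⬝ᵥ (A *ᵥ x (k + 1) - b)
          + r / 2 * ((A *ᵥ (x (k + 1) - x k)) ⬝ᵥ (A *ᵥ (x (k + 1) - x k)))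
          + 1 / 2 * ((x (k + 1) - x k) ⬝ᵥ (Q *ᵥ (x (k + 1) - x k)))
        ≤ θ z - lam k ⬝ᵥ (A *ᵥ z - b)
          + r / 2 * ((A *ᵥ (z - x k)) ⬝ᵥ (A *ᵥ (z - x k)))
          + 1 / 2 * ((z - x k) ⬝ᵥ (Q *ᵥ (z - x k)))) ∧
  (∀ k : ℕ, lam (k + 1) = lam k - r • (A *ᵥ ((2 : ℝ) • x (k + 1) - x k) - b))

section Aux

lemma dp_self_nonneg' {k : ℕ} (v : Fin k → ℝ) : 0 ≤ v ⬝ᵥ v :=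
  Finset.sum_nonneg fun _ _ => mul_self_nonneg _

lemma sym_dp' {k : ℕ} (M : Matrix (Fin k) (Fin k) ℝ) (hM : Mᵀ = M) (u v : Fin k → ℝ) :
    u ⬝ᵥ (M *ᵥ v) = v ⬝ᵥ (M *ᵥ u) := by
  rw [dotProduct_mulVec, ← mulVec_transpose, hM, dotProduct_comm]

lemma dpA' {n m : ℕ} (A : Matrix (Fin m) (Fin n) ℝ) (u : Fin n → ℝ) (v : Fin m → ℝ) :
    u ⬝ᵥ (Aᵀ *ᵥ v) = v ⬝ᵥ (A *ᵥ u) := by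
  rw [dotProduct_mulVec, vecMul_transpose, dotProduct_comm]

lemma quad_expand' {k : ℕ} (M : Matrix (Fin k) (Fin k) ℝ) (hM : Mᵀ = M)
    (u d : Fin k → ℝ) (t : ℝ) :
    (u + t • d) ⬝ᵥ (M *ᵥ (u + t • d))
      = u ⬝ᵥ (M *ᵥ u) + 2 * t * (d ⬝ᵥ (M *ᵥ u)) + t ^ 2 * (d ⬝ᵥ (M *ᵥ d)) := by
  have h := sym_dp' M hM u d
  simp only [mulVec_add, mulVec_smul, dotProduct_add, add_dotProduct, dotProduct_smul,
    smul_dotProduct, smul_eq_mul]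
  rw [h]; ring

variable {n m : ℕ} (A : Matrix (Fin m) (Fin n) ℝ) (Q : Matrix (Fin n) (Fin n) ℝ) (r : ℝ)

lemma hSsym' (hQs : Qᵀ = Q) : (r • (Aᵀ * A) + Q)ᵀ = r • (Aᵀ * A) + Q := by
  rw [transpose_add, transpose_smul, transpose_mul, transpose_transpose, hQs]

lemma Sform' (v : Fin n → ℝ) :
    r / 2 * ((A *ᵥ v) ⬝ᵥ (A *ᵥ v)) + 1 / 2 * (v ⬝ᵥ (Q *ᵥ v))
      = 1 / 2 * (v ⬝ᵥ ((r • (Aᵀ * A) + Q) *ᵥ v)) := by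
  have h : v ⬝ᵥ ((Aᵀ * A) *ᵥ v) = (A *ᵥ v) ⬝ᵥ (A *ᵥ v) := by
    rw [← mulVec_mulVec, dpA']
  simp only [add_mulVec, smul_mulVec, dotProduct_add, dotProduct_smul, smul_eq_mul, h]
  ring

lemma S_nonneg' (hr : 0 < r) (hQ : Q.PosDef) (v : Fin n → ℝ) :
    0 ≤ v ⬝ᵥ ((r • (Aᵀ * A) + Q) *ᵥ v) := by
  have hQ0 : 0 ≤ v ⬝ᵥ (Q *ᵥ v) := by simpa using hQ.posSemidef.dotProduct_mulVec_nonneg v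
  have h : v ⬝ᵥ ((Aᵀ * A) *ᵥ v) = (A *ᵥ v) ⬝ᵥ (A *ᵥ v) := by
    rw [← mulVec_mulVec, dpA']
  simp only [add_mulVec, smul_mulVec, dotProduct_add, dotProduct_smul, smul_eq_mul, h]
  have := dp_self_nonneg' (A *ᵥ v)
  nlinarith

lemma Hbil_comm' (hQs : Qᵀ = Q) (w₁ w₂ : (Fin n → ℝ) × (Fin m → ℝ)) :
    Hbil A Q r w₁ w₂ = Hbil A Q r w₂ w₁ := by
  unfold Hbil
  rw [sym_dp' _ (hSsym' A Q r hQs), dpA', dotProduct_comm w₁.2 w₂.2]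
  rw [dpA']; ring

lemma Hbil_sub_left' (u v w : (Fin n → ℝ) × (Fin m → ℝ)) :
    Hbil A Q r (u - v) w = Hbil A Q r u w - Hbil A Q r v w := by
  unfold Hbil
  simp only [Prod.fst_sub, Prod.snd_sub, sub_dotProduct]
  ring

lemma Hbil_sub_right' (u v w : (Fin n → ℝ) × (Fin m → ℝ)) :
    Hbil A Q r u (v - w) = Hbil A Q r u v - Hbil A Q r u w := by
  unfold Hbil
  simp only [Prod.fst_sub, Prod.snd_sub, mulVec_sub, dotProduct_sub]
  ring

lemma Hbil_master' (hQs : Qᵀ = Q) (a b c : (Fin n → ℝ) × (Fin m → ℝ)) :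
    Hbil A Q r (a - c) (b - c)
      = (HnormSq A Q r (c - a) - HnormSq A Q r (b - a) + HnormSq A Q r (b - c)) / 2 := by
  unfold HnormSq
  simp only [Hbil_sub_left', Hbil_sub_right']
  rw [Hbil_comm' A Q r hQs c a, Hbil_comm' A Q r hQs b a, Hbil_comm' A Q r hQs b c]
  ring

lemma HnormSq_nonneg' (hr : 0 < r) (hQ : Q.PosDef) (w : (Fin n → ℝ) × (Fin m → ℝ)) :
    0 ≤ HnormSq A Q r w := by
  have hQ0 : 0 ≤ w.1 ⬝ᵥ (Q *ᵥ w.1) := by simpa using hQ.posSemidef.dotProduct_mulVec_nonneg w.1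
  have h1 : w.1 ⬝ᵥ ((Aᵀ * A) *ᵥ w.1) = (A *ᵥ w.1) ⬝ᵥ (A *ᵥ w.1) := by
    rw [← mulVec_mulVec, dpA', dotProduct_comm]
  have key : 0 ≤ (r • (A *ᵥ w.1) + w.2) ⬝ᵥ (r • (A *ᵥ w.1) + w.2) := dp_self_nonneg' _
  unfold HnormSq Hbil
  simp only [add_mulVec, smul_mulVec, dotProduct_add, dotProduct_smul, smul_eq_mul, h1]
  rw [dpA']
  simp only [dotProduct_add, add_dotProduct, smul_dotProduct, dotProduct_smul, smul_eq_mul] at key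
  rw [dotProduct_comm (A *ᵥ w.1) w.2] at key
  have hr' : r ≠ 0 := ne_of_gt hr
  set s1 := (A *ᵥ w.1) ⬝ᵥ (A *ᵥ w.1) with hs1
  set q := w.1 ⬝ᵥ (Q *ᵥ w.1) with hq
  set s2 := w.2 ⬝ᵥ (A *ᵥ w.1) with hs2
  set s3 := w.2 ⬝ᵥ w.2 with hs3
  have h3 : 0 ≤ (r * s1 + q + s2 + s2 + 1 / r * s3) * r := by
    have he : (r * s1 + q + s2 + s2 + 1 / r * s3) * r
        = (r * (r * s1 + s2) + (r * s2 + s3)) + q * r := by field_simp; ring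
    rw [he]
    have := mul_nonneg hQ0 hr.le
    nlinarith [key]
  nlinarith [h3, hr]

end Aux

lemma opt_step' {n m : ℕ} (θ : (Fin n → ℝ) → ℝ) (hθ : ConvexOn ℝ Set.univ θ)
    (X : Set (Fin n → ℝ)) (hXconvex : Convex ℝ X)
    (A : Matrix (Fin m) (Fin n) ℝ) (b : Fin m → ℝ) (r : ℝ) (hr : 0 < r)
    (Q : Matrix (Fin n) (Fin n) ℝ) (hQ : Q.PosDef)
    (xk xp : Fin n → ℝ) (lamk : Fin m → ℝ) (hxp : xp ∈ X)
    (hmin : ∀ z ∈ X,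
      θ xp - lamk ⬝ᵥ (A *ᵥ xp - b)
          + r / 2 * ((A *ᵥ (xp - xk)) ⬝ᵥ (A *ᵥ (xp - xk)))
          + 1 / 2 * ((xp - xk) ⬝ᵥ (Q *ᵥ (xp - xk)))
        ≤ θ z - lamk ⬝ᵥ (A *ᵥ z - b)
          + r / 2 * ((A *ᵥ (z - xk)) ⬝ᵥ (A *ᵥ (z - xk)))
          + 1 / 2 * ((z - xk) ⬝ᵥ (Q *ᵥ (z - xk)))) :
    ∀ z ∈ X, 0 ≤ θ z - θ xp +
      ((z - xp) ⬝ᵥ ((r • (Aᵀ * A) + Q) *ᵥ (xp - xk)) - lamk ⬝ᵥ (A *ᵥ (z - xp))) := by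
  have hQs : Qᵀ = Q := by have h : Q.IsSymm := (by simpa using hQ.1); exact h.eq
  have hS : (r • (Aᵀ * A) + Q)ᵀ = r • (Aᵀ * A) + Q := hSsym' A Q r hQs
  intro z hz
  set S := r • (Aᵀ * A) + Q with hSdef
  set d := z - xp with hd
  set p := xp - xk with hp
  have hq : 0 ≤ d ⬝ᵥ (S *ᵥ d) := S_nonneg' A Q r hr hQ d
  set g : ℝ := θ z - θ xp + (d ⬝ᵥ (S *ᵥ p) - lamk ⬝ᵥ (A *ᵥ d)) with hg
  have key : ∀ t : ℝ, 0 < t → t ≤ 1 → 0 ≤ g + t * (d ⬝ᵥ (S *ᵥ d)) / 2 := by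
    intro t ht ht1
    have hzt : xp + t • d ∈ X := by
      have h := hXconvex hxp hz (by linarith : (0:ℝ) ≤ 1 - t) ht.le (by ring)
      have he : (1 - t) • xp + t • z = xp + t • d := by rw [hd]; module
      rwa [he] at h
    have hmin' := hmin (xp + t • d) hzt
    have hztk : xp + t • d - xk = p + t • d := by rw [hp]; abel
    rw [hztk] at hmin'
    have e1 := Sform' A Q r p
    have e2 := Sform' A Q r (p + t • d)
    have e3 := quad_expand' _ hS p d t
    have hconv : θ (xp + t • d) ≤ (1 - t) * θ xp + t * θ z := by
      have h := hθ.2 (Set.mem_univ xp) (Set.mem_univ z)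
        (by linarith : (0:ℝ) ≤ 1 - t) ht.le (by ring)
      have he : (1 - t) • xp + t • z = xp + t • d := by rw [hd]; module
      rw [he] at h
      simpa [smul_eq_mul] using h
    have hlin : lamk ⬝ᵥ (A *ᵥ (xp + t • d) - b)
        = lamk ⬝ᵥ (A *ᵥ xp - b) + t * (lamk ⬝ᵥ (A *ᵥ d)) := by
      simp only [mulVec_add, mulVec_smul, dotProduct_sub, dotProduct_add, dotProduct_smul,
        smul_eq_mul]
      ring
    rw [hlin] at hmin'
    have h0 : 0 ≤ t * (g + t * (d ⬝ᵥ (S *ᵥ d)) / 2) := by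
      rw [hg]; nlinarith [hmin', hconv, e1, e2, e3]
    nlinarith [h0, ht]
  by_contra hneg
  push_neg at hneg
  have hglt : g < 0 := by
    rw [hg]; linarith [hneg]
  set q' := d ⬝ᵥ (S *ᵥ d) with hq'
  have hq1 : (0:ℝ) < q' + 1 := by linarith
  set t := min 1 (-g / (q' + 1)) with htdef
  have ht : 0 < t := lt_min one_pos (div_pos (by linarith) hq1)
  have ht1 : t ≤ 1 := min_le_left _ _
  have ht2 : t ≤ -g / (q' + 1) := min_le_right _ _
  have h2 : t * (q' + 1) ≤ -g := (le_div_iff₀ hq1).mp ht2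
  have h := key t ht ht1
  nlinarith [mul_nonneg ht.le hq]

lemma step_ineq' {n m : ℕ} (θ : (Fin n → ℝ) → ℝ) (hθ : ConvexOn ℝ Set.univ θ)
    (X : Set (Fin n → ℝ)) (hXconvex : Convex ℝ X)
    (A : Matrix (Fin m) (Fin n) ℝ) (b : Fin m → ℝ) (r : ℝ) (hr : 0 < r)
    (Q : Matrix (Fin n) (Fin n) ℝ) (hQ : Q.PosDef)
    (xk xp : Fin n → ℝ) (lamk lamp : Fin m → ℝ) (hxp : xp ∈ X)
    (hmin : ∀ z ∈ X,
      θ xp - lamk ⬝ᵥ (A *ᵥ xp - b)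
          + r / 2 * ((A *ᵥ (xp - xk)) ⬝ᵥ (A *ᵥ (xp - xk)))
          + 1 / 2 * ((xp - xk) ⬝ᵥ (Q *ᵥ (xp - xk)))
        ≤ θ z - lamk ⬝ᵥ (A *ᵥ z - b)
          + r / 2 * ((A *ᵥ (z - xk)) ⬝ᵥ (A *ᵥ (z - xk)))
          + 1 / 2 * ((z - xk) ⬝ᵥ (Q *ᵥ (z - xk))))
    (hlamp : lamp = lamk - r • (A *ᵥ ((2:ℝ) • xp - xk) - b)) :
    ∀ w : (Fin n → ℝ) × (Fin m → ℝ), w.1 ∈ X →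
      θ xp - θ w.1 + pdot ((xp, lamp) - w) (Jmap A b w)
        ≤ (HnormSq A Q r ((xk, lamk) - w) - HnormSq A Q r ((xp, lamp) - w)) / 2 := by
  have hQs : Qᵀ = Q := by have h : Q.IsSymm := (by simpa using hQ.1); exact h.eq
  intro w hw
  have hopt := opt_step' θ hθ X hXconvex A b r hr Q hQ xk xp lamk hxp hmin w.1 hw
  set S := r • (Aᵀ * A) + Q with hSdef
  set d := w.1 - xp with hd
  set e := w.2 - lamp with he
  set dk := xk - xp with hdk
  set ek := lamk - lamp with hek
  have f1 : d ⬝ᵥ (S *ᵥ dk) = -(d ⬝ᵥ (S *ᵥ (xp - xk))) := by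
    rw [hdk, show xk - xp = -(xp - xk) from (neg_sub xp xk).symm, mulVec_neg, dotProduct_neg]
  have f2 : lamk ⬝ᵥ (A *ᵥ d) = d ⬝ᵥ (Aᵀ *ᵥ ek) + d ⬝ᵥ (Aᵀ *ᵥ lamp) := by
    rw [← dpA' A d lamk, show lamk = ek + lamp from by rw [hek]; abel, mulVec_add, dotProduct_add]
  have f3 : d ⬝ᵥ (-(Aᵀ *ᵥ w.2)) = -(d ⬝ᵥ (Aᵀ *ᵥ lamp)) - e ⬝ᵥ (A *ᵥ d) := by
    rw [show w.2 = e + lamp from by rw [he]; abel, mulVec_add, dotProduct_neg, dotProduct_add,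
      dpA' A d e]
    ring
  have f4 : e ⬝ᵥ (A *ᵥ w.1 - b) = e ⬝ᵥ (A *ᵥ xp - b) + e ⬝ᵥ (A *ᵥ d) := by
    rw [show A *ᵥ w.1 - b = (A *ᵥ xp - b) + A *ᵥ d from by rw [hd, mulVec_sub]; abel,
      dotProduct_add]
  have hekv : (1 / r) • ek = A *ᵥ ((2:ℝ) • xp - xk) - b := by
    rw [hek, hlamp, sub_sub_cancel, smul_smul, one_div_mul_cancel hr.ne', one_smul]
  have hvec : A *ᵥ xp - b = A *ᵥ dk + (1 / r) • ek := by
    rw [hekv, hdk, mulVec_sub, mulVec_sub, mulVec_smul]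
    module
  have f5 : e ⬝ᵥ (A *ᵥ xp - b) = e ⬝ᵥ (A *ᵥ dk) + 1 / r * (e ⬝ᵥ ek) := by
    rw [hvec, dotProduct_add, dotProduct_smul, smul_eq_mul]
  have hcore : Hbil A Q r (w - (xp, lamp)) ((xk, lamk) - (xp, lamp))
      ≤ θ w.1 - θ xp + pdot (w - (xp, lamp)) (Jmap A b w) := by
    unfold Hbil pdot Jmap
    simp only [Prod.fst_sub, Prod.snd_sub, ← hSdef, ← hd, ← he, ← hdk, ← hek]
    linarith [hopt, f1, f2, f3, f4, f5]
  have hmaster := Hbil_master' A Q r hQs w (xk, lamk) (xp, lamp)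
  have hnn := HnormSq_nonneg' A Q r hr hQ ((xk, lamk) - (xp, lamp))
  have hpd : pdot ((xp, lamp) - w) (Jmap A b w) = -(pdot (w - (xp, lamp)) (Jmap A b w)) := by
    unfold pdot
    simp only [Prod.fst_sub, Prod.snd_sub, sub_dotProduct]
    ring
  linarith [hcore, hmaster, hnn, hpd]

lemma avg_shift' {k N : ℕ} (c : ℝ) (hc : c * (N : ℝ) = 1) (v : ℕ → Fin k → ℝ)
    (wv : Fin k → ℝ) :
    c • ∑ i ∈ Finset.range N, (v i - wv) = c • (∑ i ∈ Finset.range N, v i) - wv := by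
  rw [Finset.sum_sub_distrib, smul_sub, Finset.sum_const, Finset.card_range,
    ← Nat.cast_smul_eq_nsmul ℝ, smul_smul, hc, one_smul]

/-- Theorem 2.5, ergodic `O(1/T)` rate. -/
theorem stmt_11 (n m : ℕ) (θ : (Fin n → ℝ) → ℝ) (hθ : ConvexOn ℝ Set.univ θ)
    (X : Set (Fin n → ℝ)) (hXne : X.Nonempty) (hXclosed : IsClosed X) (hXconvex : Convex ℝ X)
    (A : Matrix (Fin m) (Fin n) ℝ) (b : Fin m → ℝ) (r : ℝ) (hr : 0 < r)
    (Q : Matrix (Fin n) (Fin n) ℝ) (hQ : Q.PosDef)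
    (x : ℕ → Fin n → ℝ) (lam : ℕ → Fin m → ℝ) (halg : PALM θ X A b r Q x lam) :
    ∀ T : ℕ, 0 < T → ∀ κ : ℕ,
      ∀ xT : Fin n → ℝ, xT = ((T : ℝ) + 1)⁻¹ • ∑ k ∈ Finset.range (T + 1), x (κ + k + 1) →
      ∀ lamT : Fin m → ℝ,
        lamT = ((T : ℝ) + 1)⁻¹ • ∑ k ∈ Finset.range (T + 1), lam (κ + k + 1) →
      ∀ w : (Fin n → ℝ) × (Fin m → ℝ), w.1 ∈ X →
        θ xT - θ w.1 + pdot ((xT, lamT) - w) (Jmap A b w) ≤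
          HnormSq A Q r ((x κ, lam κ) - w) / (2 * ((T : ℝ) + 1)) := by
  obtain ⟨hmin, hlam⟩ := halg
  intro T hT κ xT hxT lamT hlamT w hw
  have hc : (0:ℝ) < (T:ℝ) + 1 := by positivity
  set c : ℝ := ((T:ℝ) + 1)⁻¹ with hcdef
  have hc0 : 0 < c := by positivity
  have hcT : c * ((T:ℝ) + 1) = 1 := inv_mul_cancel₀ hc.ne'
  have hcT' : c * (((T + 1 : ℕ)):ℝ) = 1 := by push_cast; exact hcT
  set J := Jmap A b w with hJ
  set f : ℕ → ℝ := fun j => HnormSq A Q r ((x j, lam j) - w) with hf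
  set L : ℕ → ℝ := fun k => θ (x (k+1)) - θ w.1 + pdot ((x (k+1), lam (k+1)) - w) J with hL
  have step : ∀ k : ℕ, L k ≤ (f k - f (k+1)) / 2 := by
    intro k
    have h := step_ineq' θ hθ X hXconvex A b r hr Q hQ (x k) (x (k+1)) (lam k) (lam (k+1))
      (hmin k).1 (hmin k).2 (hlam k) w hw
    simpa [hL, hf, hJ] using h
  have hsum : ∑ k ∈ Finset.range (T+1), L (κ + k) ≤ f κ / 2 := by
    have h1 : ∑ k ∈ Finset.range (T+1), L (κ + k)
        ≤ ∑ k ∈ Finset.range (T+1), (f (κ + k) - f (κ + (k+1))) / 2 :=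
      Finset.sum_le_sum fun k _ => step (κ + k)
    have h2 : ∑ k ∈ Finset.range (T+1), (f (κ + k) - f (κ + (k+1))) / 2
        = (f (κ + 0) - f (κ + (T+1))) / 2 := by
      rw [← Finset.sum_div, Finset.sum_range_sub' (fun i => f (κ + i)) (T+1)]
    have h3 : 0 ≤ f (κ + (T+1)) := HnormSq_nonneg' A Q r hr hQ _
    simp only [Nat.add_zero] at h2
    linarith
  -- Jensen
  have hsum1 : ∑ _k ∈ Finset.range (T+1), c = 1 := by
    rw [Finset.sum_const, Finset.card_range, nsmul_eq_mul, mul_comm]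
    exact hcT'
  have hJen : θ xT ≤ ∑ k ∈ Finset.range (T+1), c * θ (x (κ + k + 1)) := by
    have h := ConvexOn.map_sum_le (t := Finset.range (T+1)) (w := fun _ => c)
      (p := fun k => x (κ + k + 1)) hθ (fun i _ => hc0.le) hsum1 (fun i _ => Set.mem_univ _)
    have he : ∑ k ∈ Finset.range (T+1), c • x (κ + k + 1) = xT := by
      rw [← Finset.smul_sum]; exact hxT.symm
    rw [he] at h
    simpa [smul_eq_mul] using h
  -- pdot decomposition
  let φ : ((Fin n → ℝ) × (Fin m → ℝ)) →ₗ[ℝ] ℝ :=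
    { toFun := fun u => pdot u J
      map_add' := by
        intro u v
        unfold pdot
        simp only [Prod.fst_add, Prod.snd_add, add_dotProduct]
        ring
      map_smul' := by
        intro a u
        unfold pdot
        simp only [Prod.smul_fst, Prod.smul_snd, smul_dotProduct, smul_eq_mul,
          RingHom.id_apply]
        ring }
  have hkey : (xT, lamT) - w = c • ∑ k ∈ Finset.range (T+1),
      ((x (κ + k + 1), lam (κ + k + 1)) - w) := by
    apply Prod.ext
    · simp only [Prod.fst_sub, Prod.smul_fst, Prod.fst_sum]
      rw [avg_shift' c hcT' (fun k => x (κ + k + 1)) w.1, hxT]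
    · simp only [Prod.snd_sub, Prod.smul_snd, Prod.snd_sum]
      rw [avg_shift' c hcT' (fun k => lam (κ + k + 1)) w.2, hlamT]
  have hpdsum : pdot ((xT, lamT) - w) J
      = c * ∑ k ∈ Finset.range (T+1), pdot ((x (κ + k + 1), lam (κ + k + 1)) - w) J := by
    have h1 : pdot ((xT, lamT) - w) J = φ ((xT, lamT) - w) := rfl
    rw [h1, hkey, φ.map_smul, map_sum]
    simp only [smul_eq_mul]
    rfl
  have hLexp : ∑ k ∈ Finset.range (T+1), L (κ + k)
      = (∑ k ∈ Finset.range (T+1), θ (x (κ + k + 1))) - (((T+1 : ℕ)):ℝ) * θ w.1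
        + ∑ k ∈ Finset.range (T+1), pdot ((x (κ + k + 1), lam (κ + k + 1)) - w) J := by
    rw [hL]
    rw [Finset.sum_add_distrib, Finset.sum_sub_distrib, Finset.sum_const, Finset.card_range,
      nsmul_eq_mul]
  have hfinal : θ xT - θ w.1 + pdot ((xT, lamT) - w) J ≤ c * ∑ k ∈ Finset.range (T+1), L (κ + k) := by
    have h1 : c * ∑ k ∈ Finset.range (T+1), L (κ + k)
        = c * (∑ k ∈ Finset.range (T+1), θ (x (κ + k + 1))) - θ w.1
          + pdot ((xT, lamT) - w) J := by
      rw [hLexp, hpdsum]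
      linear_combination (-(θ w.1)) * hcT'
    rw [h1, Finset.mul_sum] at *
    linarith [hJen]
  have h2 : c * ∑ k ∈ Finset.range (T+1), L (κ + k) ≤ c * (f κ / 2) :=
    mul_le_mul_of_nonneg_left hsum hc0.le
  have h3 : c * (f κ / 2) = f κ / (2 * ((T:ℝ) + 1)) := by
    rw [hcdef]
    rw [eq_div_iff (by positivity : (2 * ((T:ℝ) + 1)) ≠ 0)]
    field_simp
  calc θ xT - θ w.1 + pdot ((xT, lamT) - w) J ≤ c * ∑ k ∈ Finset.range (T+1), L (κ + k) := hfinal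
    _ ≤ c * (f κ / 2) := h2
    _ = f κ / (2 * ((T:ℝ) + 1)) := h3
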